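/- Let γ ∈ (0,1), μ > 0, r : [0,T] → ℝ continuous, M(θ) = θ^{−γ} ∫₀^θ (1 − e^{−μξ^γ})/ξ^{1−γ} dξ, and v₃(t) = ∫₀^t M(t−τ) r(τ) dτ. Then for every t ∈ (0,T), the right-hand derivative of v₃ at t exists and equals ∫₀^t M'(t−τ) r(τ) dτ = μγ ∫₀^t (r(τ)/(t−τ)^{γ+1}) ∫₀^{t−τ} ξ^{2γ−1} e^{−μξ^γ} dξ dτ. -/

import Mathlib

open MeasureTheory Set

/-- The auxiliary function `M(θ) = θ^(−γ) ∫₀^θ (1 − e^(−μξ^γ))/ξ^(1−γ) dξ`. -/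
noncomputable def Mfun (γ μ θ : ℝ) : ℝ :=
  θ ^ (-γ) * ∫ ξ in (0:ℝ)..θ, (1 - Real.exp (-(μ * ξ ^ γ))) / ξ ^ (1 - γ)

open intervalIntegral Topology Filter

section aux
variable {γ μ : ℝ} (hγ0 : 0 < γ) (hγ1 : γ < 1) (hμ : 0 < μ)
include hγ0 hγ1 hμ

lemma k_int (a b : ℝ) :
    IntervalIntegrable (fun ξ : ℝ => ξ ^ (2*γ-1) * Real.exp (-(μ * ξ ^ γ))) volume a b := by
  apply IntervalIntegrable.mul_continuousOn (intervalIntegrable_rpow' (by linarith))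
  exact (Real.continuous_exp.comp (continuous_neg.comp
    ((continuous_const.mul (Real.continuous_rpow_const hγ0.le))))).continuousOn

lemma g_contOn : ContinuousOn
    (fun ξ : ℝ => (1 - Real.exp (-(μ * ξ ^ γ))) / ξ ^ (1 - γ)) (Ioi 0) := by
  apply ContinuousOn.div
  · exact (continuous_const.sub (Real.continuous_exp.comp (continuous_neg.comp
      (continuous_const.mul (Real.continuous_rpow_const hγ0.le))))).continuousOn
  · exact (Real.continuous_rpow_const (by linarith)).continuousOn
  · intro x hx
    exact (Real.rpow_pos_of_pos hx _).ne'

lemma g_int {θ : ℝ} (hθ : 0 ≤ θ) :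
    IntervalIntegrable (fun ξ : ℝ => (1 - Real.exp (-(μ * ξ ^ γ))) / ξ ^ (1 - γ)) volume 0 θ := by
  rw [intervalIntegrable_iff, uIoc_of_le hθ]
  have h0 : IntervalIntegrable (fun ξ : ℝ => ξ ^ (γ-1) * (1 - Real.exp (-(μ * ξ ^ γ)))) volume 0 θ := by
    apply IntervalIntegrable.mul_continuousOn (intervalIntegrable_rpow' (by linarith))
    exact (continuous_const.sub (Real.continuous_exp.comp (continuous_neg.comp
      (continuous_const.mul (Real.continuous_rpow_const hγ0.le))))).continuousOn
  rw [intervalIntegrable_iff, uIoc_of_le hθ] at h0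
  refine h0.congr_fun (fun ξ hξ => ?_) measurableSet_Ioc
  rw [div_eq_mul_inv, ← Real.rpow_neg (le_of_lt hξ.1), mul_comm]
  ring_nf

end aux

section aux2
set_option linter.unusedSectionVars false
variable {γ μ : ℝ} (hγ0 : 0 < γ) (hγ1 : γ < 1) (hμ : 0 < μ)
include hγ0 hγ1 hμ

noncomputable def Kfun (γ μ θ : ℝ) : ℝ :=
  ∫ ξ in (0:ℝ)..θ, ξ ^ (2*γ-1) * Real.exp (-(μ * ξ ^ γ))

lemma GK {θ : ℝ} (hθ : 0 < θ) :
    (∫ ξ in (0:ℝ)..θ, (1 - Real.exp (-(μ * ξ ^ γ))) / ξ ^ (1 - γ)) =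
      θ ^ γ * (1 - Real.exp (-(μ * θ ^ γ))) / γ - μ * Kfun γ μ θ := by
  have hcont : Continuous (fun ξ : ℝ => ξ ^ γ * (1 - Real.exp (-(μ * ξ ^ γ))) / γ) := by
    exact ((Real.continuous_rpow_const hγ0.le).mul (continuous_const.sub
      (Real.continuous_exp.comp (continuous_neg.comp
        (continuous_const.mul (Real.continuous_rpow_const hγ0.le)))))).div_const γ
  have hH : ∀ ξ ∈ Ioo (0:ℝ) θ, HasDerivAt (fun ξ : ℝ => ξ ^ γ * (1 - Real.exp (-(μ * ξ ^ γ))) / γ)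
      ((1 - Real.exp (-(μ * ξ ^ γ))) / ξ ^ (1 - γ) + μ * (ξ ^ (2*γ-1) * Real.exp (-(μ * ξ ^ γ)))) ξ := by
    intro ξ hξ
    have hp : HasDerivAt (fun ξ : ℝ => ξ ^ γ) (γ * ξ ^ (γ-1)) ξ :=
      Real.hasDerivAt_rpow_const (Or.inl hξ.1.ne')
    have hE : HasDerivAt (fun ξ : ℝ => Real.exp (-(μ * ξ ^ γ)))
        (Real.exp (-(μ * ξ ^ γ)) * (-(μ * (γ * ξ ^ (γ-1))))) ξ :=
      (((hp.const_mul μ).neg).exp)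
    have := ((hp.mul ((hasDerivAt_const ξ (1:ℝ)).sub hE)).div_const γ)
    convert this using 1
    · rfl
    · rfl
    · rfl
    have e1 : ξ ^ (γ-1) = (ξ ^ (1-γ))⁻¹ := by
      rw [show γ - 1 = -(1-γ) by ring, Real.rpow_neg hξ.1.le]
    have e2 : ξ ^ (2*γ-1) = ξ ^ γ * ξ ^ (γ-1) := by
      rw [← Real.rpow_add hξ.1]; ring_nf
    rw [e2, e1, div_eq_mul_inv, eq_div_iff hγ0.ne']
    simp only [Pi.sub_apply]
    ring
  have hint : IntervalIntegrable (fun ξ : ℝ => (1 - Real.exp (-(μ * ξ ^ γ))) / ξ ^ (1 - γ)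
      + μ * (ξ ^ (2*γ-1) * Real.exp (-(μ * ξ ^ γ)))) volume 0 θ :=
    (g_int hγ0 hγ1 hμ hθ.le).add ((k_int hγ0 hγ1 hμ 0 θ).const_mul μ)
  have key := intervalIntegral.integral_eq_sub_of_hasDeriv_right_of_le hθ.le
    hcont.continuousOn (fun ξ hξ => (hH ξ hξ).hasDerivWithinAt) hint
  rw [intervalIntegral.integral_add (g_int hγ0 hγ1 hμ hθ.le)
    ((k_int hγ0 hγ1 hμ 0 θ).const_mul μ)] at key
  rw [intervalIntegral.integral_const_mul] at key
  have h0 : (0:ℝ) ^ γ * (1 - Real.exp (-(μ * (0:ℝ) ^ γ))) / γ = 0 := by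
    rw [Real.zero_rpow hγ0.ne']; ring
  rw [h0, sub_zero] at key
  have : (∫ ξ in (0:ℝ)..θ, (1 - Real.exp (-(μ * ξ ^ γ))) / ξ ^ (1 - γ)) =
      θ ^ γ * (1 - Real.exp (-(μ * θ ^ γ))) / γ - μ * ∫ ξ in (0:ℝ)..θ, ξ ^ (2*γ-1) * Real.exp (-(μ * ξ ^ γ)) := by
    linarith [key]
  exact this

lemma Mfun_hasDeriv {θ : ℝ} (hθ : 0 < θ) :
    HasDerivAt (Mfun γ μ) (μ * γ * θ ^ (-(γ+1)) * Kfun γ μ θ) θ := by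
  have h1 : HasDerivAt (fun x : ℝ => x ^ (-γ)) (-γ * θ ^ (-γ-1)) θ :=
    Real.hasDerivAt_rpow_const (Or.inl hθ.ne')
  have h2 : HasDerivAt (fun u : ℝ => ∫ ξ in (0:ℝ)..u, (1 - Real.exp (-(μ * ξ ^ γ))) / ξ ^ (1 - γ))
      ((1 - Real.exp (-(μ * θ ^ γ))) / θ ^ (1 - γ)) θ := by
    refine intervalIntegral.integral_hasDerivAt_right (g_int hγ0 hγ1 hμ hθ.le)
      ((g_contOn hγ0 hγ1 hμ).stronglyMeasurableAtFilter isOpen_Ioi θ hθ) ?_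
    exact (g_contOn hγ0 hγ1 hμ).continuousAt (Ioi_mem_nhds hθ)
  have h3 := h1.mul h2
  have : HasDerivAt (Mfun γ μ)
      (-γ * θ ^ (-γ-1) * (∫ ξ in (0:ℝ)..θ, (1 - Real.exp (-(μ * ξ ^ γ))) / ξ ^ (1 - γ))
        + θ ^ (-γ) * ((1 - Real.exp (-(μ * θ ^ γ))) / θ ^ (1 - γ))) θ := h3
  convert this using 1
  rw [GK hγ0 hγ1 hμ hθ]
  have e1 : θ ^ (-γ-1) * θ ^ γ = θ ^ (-(1:ℝ)) := by
    rw [← Real.rpow_add hθ]; ring_nf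
  have e2 : θ ^ (-γ) / θ ^ (1-γ) = θ ^ (-(1:ℝ)) := by
    rw [div_eq_mul_inv, ← Real.rpow_neg hθ.le, ← Real.rpow_add hθ]; ring_nf
  have e3 : θ ^ (-(γ+1)) = θ ^ (-γ-1) := by ring_nf
  rw [e3]
  have expand : -γ * θ ^ (-γ-1) * (θ ^ γ * (1 - Real.exp (-(μ * θ ^ γ))) / γ - μ * Kfun γ μ θ)
      + θ ^ (-γ) * ((1 - Real.exp (-(μ * θ ^ γ))) / θ ^ (1 - γ))
      = -(θ ^ (-γ-1) * θ ^ γ) * (1 - Real.exp (-(μ * θ ^ γ)))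
        + μ * γ * θ ^ (-γ-1) * Kfun γ μ θ
        + (θ ^ (-γ) / θ ^ (1-γ)) * (1 - Real.exp (-(μ * θ ^ γ))) := by
    field_simp
    ring
  rw [expand, e1, e2]
  ring

end aux2

section aux3
set_option linter.unusedSectionVars false
variable {γ μ : ℝ} (hγ0 : 0 < γ) (hγ1 : γ < 1) (hμ : 0 < μ)
include hγ0 hγ1 hμ

lemma K_nonneg {θ : ℝ} (hθ : 0 ≤ θ) : 0 ≤ Kfun γ μ θ := by
  refine intervalIntegral.integral_nonneg hθ (fun ξ hξ => ?_)
  exact mul_nonneg (Real.rpow_nonneg hξ.1 _) (Real.exp_pos _).le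

lemma K_le {θ : ℝ} (hθ : 0 ≤ θ) : Kfun γ μ θ ≤ θ ^ (2*γ) / (2*γ) := by
  have h1 : Kfun γ μ θ ≤ ∫ ξ in (0:ℝ)..θ, ξ ^ (2*γ-1) := by
    refine intervalIntegral.integral_mono_on hθ (k_int hγ0 hγ1 hμ 0 θ)
      (intervalIntegrable_rpow' (by linarith)) (fun ξ hξ => ?_)
    refine mul_le_of_le_one_right (Real.rpow_nonneg hξ.1 _) ?_
    rw [Real.exp_le_one_iff]
    exact neg_nonpos.mpr (mul_nonneg hμ.le (Real.rpow_nonneg hξ.1 _))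
  have h2 : (∫ ξ in (0:ℝ)..θ, ξ ^ (2*γ-1)) = θ ^ (2*γ) / (2*γ) := by
    rw [integral_rpow (Or.inl (by linarith))]
    rw [show 2*γ-1+1 = 2*γ by ring, Real.zero_rpow (by positivity : 2*γ ≠ 0)]
    ring
  linarith

lemma Mderiv_nonneg {θ : ℝ} (hθ : 0 < θ) : 0 ≤ μ * γ * θ ^ (-(γ+1)) * Kfun γ μ θ := by
  have := K_nonneg hγ0 hγ1 hμ hθ.le
  positivity

lemma Mderiv_le {θ : ℝ} (hθ : 0 < θ) :
    μ * γ * θ ^ (-(γ+1)) * Kfun γ μ θ ≤ μ/2 * θ ^ (γ-1) := by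
  have h1 : μ * γ * θ ^ (-(γ+1)) * Kfun γ μ θ ≤ μ * γ * θ ^ (-(γ+1)) * (θ ^ (2*γ) / (2*γ)) := by
    refine mul_le_mul_of_nonneg_left (K_le hγ0 hγ1 hμ hθ.le) ?_
    positivity
  have e1 : θ ^ (-(γ+1)) * θ ^ (2*γ) = θ ^ (γ-1) := by
    rw [← Real.rpow_add hθ]; ring_nf
  calc μ * γ * θ ^ (-(γ+1)) * Kfun γ μ θ ≤ μ * γ * θ ^ (-(γ+1)) * (θ ^ (2*γ) / (2*γ)) := h1
    _ = μ/2 * (θ ^ (-(γ+1)) * θ ^ (2*γ)) := by field_simp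
    _ = μ/2 * θ ^ (γ-1) := by rw [e1]

lemma M_zero : Mfun γ μ 0 = 0 := by
  unfold Mfun; rw [intervalIntegral.integral_same]; ring

lemma g_nonneg {ξ : ℝ} (hξ : 0 ≤ ξ) : 0 ≤ (1 - Real.exp (-(μ * ξ ^ γ))) / ξ ^ (1 - γ) := by
  rcases eq_or_lt_of_le hξ with h | h
  · rw [← h, Real.zero_rpow (by linarith : (1:ℝ) - γ ≠ 0), div_zero]
  · apply div_nonneg _ (Real.rpow_nonneg hξ _)
    have : Real.exp (-(μ * ξ ^ γ)) ≤ 1 := by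
      rw [Real.exp_le_one_iff]
      exact neg_nonpos.mpr (mul_nonneg hμ.le (Real.rpow_nonneg hξ _))
    linarith

lemma g_le {ξ : ℝ} (hξ : 0 ≤ ξ) :
    (1 - Real.exp (-(μ * ξ ^ γ))) / ξ ^ (1 - γ) ≤ μ * ξ ^ (2*γ-1) := by
  rcases eq_or_lt_of_le hξ with h | h
  · rw [← h, Real.zero_rpow (by linarith : (1:ℝ) - γ ≠ 0), div_zero]
    positivity
  · have h1 : 1 - Real.exp (-(μ * ξ ^ γ)) ≤ μ * ξ ^ γ := by
      have := Real.add_one_le_exp (-(μ * ξ ^ γ))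
      linarith
    have h2 : (1 - Real.exp (-(μ * ξ ^ γ))) / ξ ^ (1 - γ) ≤ μ * ξ ^ γ / ξ ^ (1 - γ) :=
      div_le_div_of_nonneg_right h1 (Real.rpow_pos_of_pos h _).le |>.trans_eq rfl
    refine h2.trans_eq ?_
    rw [mul_div_assoc, ← Real.rpow_sub h]
    ring_nf

lemma M_nonneg {θ : ℝ} (hθ : 0 ≤ θ) : 0 ≤ Mfun γ μ θ := by
  rcases eq_or_lt_of_le hθ with h | h
  · rw [← h, M_zero hγ0 hγ1 hμ]
  · unfold Mfun
    refine mul_nonneg (Real.rpow_nonneg hθ _) ?_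
    exact intervalIntegral.integral_nonneg hθ (fun ξ hξ => g_nonneg hγ0 hγ1 hμ hξ.1)

lemma M_le {θ : ℝ} (hθ : 0 ≤ θ) : Mfun γ μ θ ≤ μ/(2*γ) * θ ^ γ := by
  rcases eq_or_lt_of_le hθ with h | h
  · rw [← h, M_zero hγ0 hγ1 hμ, Real.zero_rpow hγ0.ne']; simp
  · have hG : (∫ ξ in (0:ℝ)..θ, (1 - Real.exp (-(μ * ξ ^ γ))) / ξ ^ (1 - γ))
        ≤ μ * (θ ^ (2*γ) / (2*γ)) := by
      have h1 : (∫ ξ in (0:ℝ)..θ, (1 - Real.exp (-(μ * ξ ^ γ))) / ξ ^ (1 - γ))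
          ≤ ∫ ξ in (0:ℝ)..θ, μ * ξ ^ (2*γ-1) := by
        refine intervalIntegral.integral_mono_on hθ (g_int hγ0 hγ1 hμ hθ)
          ((intervalIntegrable_rpow' (by linarith)).const_mul μ)
          (fun ξ hξ => g_le hγ0 hγ1 hμ hξ.1)
      have h2 : (∫ ξ in (0:ℝ)..θ, μ * ξ ^ (2*γ-1)) = μ * (θ ^ (2*γ) / (2*γ)) := by
        rw [intervalIntegral.integral_const_mul, integral_rpow (Or.inl (by linarith))]
        rw [show 2*γ-1+1 = 2*γ by ring, Real.zero_rpow (by positivity : 2*γ ≠ 0)]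
        ring
      linarith
    unfold Mfun
    have h3 : θ ^ (-γ) * (∫ ξ in (0:ℝ)..θ, (1 - Real.exp (-(μ * ξ ^ γ))) / ξ ^ (1 - γ))
        ≤ θ ^ (-γ) * (μ * (θ ^ (2*γ) / (2*γ))) :=
      mul_le_mul_of_nonneg_left hG (Real.rpow_nonneg hθ _)
    refine h3.trans_eq ?_
    have e1 : θ ^ (-γ) * θ ^ (2*γ) = θ ^ γ := by
      rw [← Real.rpow_add h]; ring_nf
    calc θ ^ (-γ) * (μ * (θ ^ (2*γ) / (2*γ))) = μ/(2*γ) * (θ ^ (-γ) * θ ^ (2*γ)) := by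
          field_simp
      _ = μ/(2*γ) * θ ^ γ := by rw [e1]

end aux3

section aux4
set_option linter.unusedSectionVars false
variable {γ μ : ℝ} (hγ0 : 0 < γ) (hγ1 : γ < 1) (hμ : 0 < μ)
include hγ0 hγ1 hμ

lemma M_contOn : ContinuousOn (Mfun γ μ) (Ioi 0) :=
  fun θ hθ => ((Mfun_hasDeriv hγ0 hγ1 hμ hθ).continuousAt).continuousWithinAt

lemma Mr_int {T : ℝ} {r : ℝ → ℝ} (hr : ContinuousOn r (Icc 0 T)) {Cr : ℝ}
    (hCr : ∀ x ∈ Icc 0 T, ‖r x‖ ≤ Cr) {s a b : ℝ} (hs0 : 0 < s) (hsT : s ≤ T)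
    (ha : a ∈ Icc 0 s) (hb : b ∈ Icc 0 s) :
    IntervalIntegrable (fun τ => Mfun γ μ (s - τ) * r τ) volume a b := by
  have hcont : ContinuousOn (fun τ => Mfun γ μ (s - τ) * r τ) (Ioo 0 s) := by
    apply ContinuousOn.mul
    · refine (M_contOn hγ0 hγ1 hμ).comp ((continuous_const.sub continuous_id).continuousOn) ?_
      intro τ hτ
      exact mem_Ioi.mpr (sub_pos.mpr hτ.2)
    · exact hr.mono (fun τ hτ => ⟨hτ.1.le, hτ.2.le.trans hsT⟩)
  have hIoo : IntegrableOn (fun τ => Mfun γ μ (s - τ) * r τ) (Ioo 0 s) volume := by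
    refine Integrable.mono' (g := fun _ => μ/(2*γ) * s ^ γ * Cr)
      (integrableOn_const measure_Ioo_lt_top.ne)
      (hcont.aestronglyMeasurable measurableSet_Ioo) ?_
    filter_upwards [ae_restrict_mem measurableSet_Ioo] with τ hτ
    have h1 : 0 ≤ Mfun γ μ (s - τ) := M_nonneg hγ0 hγ1 hμ (by linarith [hτ.2])
    have h2 : Mfun γ μ (s - τ) ≤ μ/(2*γ) * (s - τ) ^ γ := M_le hγ0 hγ1 hμ (by linarith [hτ.2])
    have h3 : (s - τ) ^ γ ≤ s ^ γ :=
      Real.rpow_le_rpow (by linarith [hτ.2]) (by linarith [hτ.1]) hγ0.le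
    have h4 : ‖r τ‖ ≤ Cr := hCr τ ⟨hτ.1.le, hτ.2.le.trans hsT⟩
    have hCr0 : 0 ≤ Cr := le_trans (norm_nonneg _) h4
    rw [norm_mul, Real.norm_eq_abs (Mfun _ _ _), abs_of_nonneg h1]
    calc Mfun γ μ (s - τ) * ‖r τ‖ ≤ (μ/(2*γ) * s ^ γ) * Cr := by
          apply mul_le_mul (h2.trans _) h4 (norm_nonneg _)
          · positivity
          · exact mul_le_mul_of_nonneg_left h3 (by positivity)
      _ = μ/(2*γ) * s ^ γ * Cr := by ring
  rw [intervalIntegrable_iff]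
  have hsub : Ioo (a ⊓ b) (a ⊔ b) ⊆ Ioo 0 s :=
    Ioo_subset_Ioo (le_inf ha.1 hb.1) (sup_le ha.2 hb.2)
  exact (hIoo.mono_set hsub).congr_set_ae Ioo_ae_eq_Ioc.symm

end aux4

theorem stmt12 (γ μ T : ℝ) (hγ0 : 0 < γ) (hγ1 : γ < 1) (hμ : 0 < μ) (hT : 0 < T)
    (r : ℝ → ℝ) (hr : ContinuousOn r (Icc 0 T))
    (v₃ : ℝ → ℝ) (hv₃ : ∀ s, v₃ s = ∫ τ in (0:ℝ)..s, Mfun γ μ (s - τ) * r τ)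
    (t : ℝ) (ht0 : 0 < t) (htT : t < T) :
    (∫ τ in (0:ℝ)..t, deriv (Mfun γ μ) (t - τ) * r τ) =
      μ * γ * ∫ τ in (0:ℝ)..t, (r τ / (t - τ) ^ (γ + 1)) *
        ∫ ξ in (0:ℝ)..(t - τ), ξ ^ (2 * γ - 1) * Real.exp (-(μ * ξ ^ γ)) ∧
    HasDerivWithinAt v₃
      (μ * γ * ∫ τ in (0:ℝ)..t, (r τ / (t - τ) ^ (γ + 1)) *
        ∫ ξ in (0:ℝ)..(t - τ), ξ ^ (2 * γ - 1) * Real.exp (-(μ * ξ ^ γ)))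
      (Set.Ici t) t := by
  obtain ⟨Cr, hCr⟩ : ∃ C, ∀ x ∈ Icc (0:ℝ) T, ‖r x‖ ≤ C :=
    isCompact_Icc.exists_bound_of_continuousOn hr
  have hCr0 : 0 ≤ Cr := le_trans (norm_nonneg _) (hCr 0 ⟨le_refl 0, hT.le⟩)
  have h_ne : ∀ᵐ (τ : ℝ), τ ≠ t := by
    rw [ae_iff]
    simp only [ne_eq, not_not]
    rw [show {a : ℝ | a = t} = {t} by ext x; simp]
    exact measure_singleton t
  -- Part 1
  have part1 : (∫ τ in (0:ℝ)..t, deriv (Mfun γ μ) (t - τ) * r τ) =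
      μ * γ * ∫ τ in (0:ℝ)..t, (r τ / (t - τ) ^ (γ + 1)) *
        ∫ ξ in (0:ℝ)..(t - τ), ξ ^ (2 * γ - 1) * Real.exp (-(μ * ξ ^ γ)) := by
    have hae : ∀ᵐ τ, τ ∈ uIoc (0:ℝ) t → deriv (Mfun γ μ) (t - τ) * r τ =
        μ * γ * ((r τ / (t - τ) ^ (γ + 1)) *
          ∫ ξ in (0:ℝ)..(t - τ), ξ ^ (2 * γ - 1) * Real.exp (-(μ * ξ ^ γ))) := by
      filter_upwards [h_ne] with τ hτt hτ
      rw [uIoc_of_le ht0.le] at hτ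
      have hθ : 0 < t - τ := sub_pos.mpr (lt_of_le_of_ne hτ.2 hτt)
      rw [(Mfun_hasDeriv hγ0 hγ1 hμ hθ).deriv]
      show μ * γ * (t - τ) ^ (-(γ+1)) * Kfun γ μ (t - τ) * r τ = _
      rw [Real.rpow_neg hθ.le]
      unfold Kfun
      rw [div_eq_mul_inv]
      ring
    rw [intervalIntegral.integral_congr_ae hae, intervalIntegral.integral_const_mul]
  refine ⟨part1, ?_⟩
  rw [← part1]
  -- Part 2: the right derivative
  rw [hasDerivWithinAt_iff_tendsto_slope, Ici_sdiff_left]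
  have hs_ev : ∀ᶠ s in 𝓝[>] t, s ∈ Ioo t T := Ioo_mem_nhdsGT_of_mem ⟨le_refl t, htT⟩
  set I : ℝ := ∫ τ in (0:ℝ)..t, deriv (Mfun γ μ) (t - τ) * r τ with hI
  -- A: dominated convergence part
  have hA : Filter.Tendsto
      (fun s => ∫ τ in (0:ℝ)..t, (Mfun γ μ (s - τ) - Mfun γ μ (t - τ)) * r τ / (s - t))
      (𝓝[>] t) (𝓝 I) := by
    apply intervalIntegral.tendsto_integral_filter_of_dominated_convergence
      (fun τ => μ/2 * (t - τ) ^ (γ - 1) * Cr)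
    · -- measurability
      filter_upwards [hs_ev] with s hs
      rw [uIoc_of_le ht0.le, ← Measure.restrict_congr_set Ioo_ae_eq_Ioc]
      refine ContinuousOn.aestronglyMeasurable ?_ measurableSet_Ioo
      apply ContinuousOn.div_const
      apply ContinuousOn.mul
      · apply ContinuousOn.sub
        · refine (M_contOn hγ0 hγ1 hμ).comp
            ((continuous_const.sub continuous_id).continuousOn) ?_
          intro τ hτ
          exact mem_Ioi.mpr (by linarith [hτ.2, hs.1])
        · refine (M_contOn hγ0 hγ1 hμ).comp
            ((continuous_const.sub continuous_id).continuousOn) ?_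
          intro τ hτ
          exact mem_Ioi.mpr (by linarith [hτ.2])
      · exact hr.mono (fun τ hτ => ⟨hτ.1.le, by linarith [hτ.2]⟩)
    · -- bound
      filter_upwards [hs_ev] with s hs
      filter_upwards [h_ne] with τ hτt hτ
      rw [uIoc_of_le ht0.le] at hτ
      have hτt' : τ < t := lt_of_le_of_ne hτ.2 hτt
      have hθ : 0 < t - τ := by linarith
      have hab : t - τ < s - τ := by linarith [hs.1]
      obtain ⟨c, hc, hceq⟩ := exists_hasDerivAt_eq_slope (Mfun γ μ)
        (fun θ => μ * γ * θ ^ (-(γ+1)) * Kfun γ μ θ) hab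
        ((M_contOn hγ0 hγ1 hμ).mono (fun x hx => mem_Ioi.mpr (lt_of_lt_of_le hθ hx.1)))
        (fun x hx => Mfun_hasDeriv hγ0 hγ1 hμ (lt_trans hθ hx.1))
      have hc0 : 0 < c := lt_trans hθ hc.1
      have heq2 : (Mfun γ μ (s - τ) - Mfun γ μ (t - τ)) / (s - t) =
          μ * γ * c ^ (-(γ+1)) * Kfun γ μ c := by
        rw [hceq]
        congr 1
        ring
      have hbc : μ * γ * c ^ (-(γ+1)) * Kfun γ μ c ≤ μ/2 * (t - τ) ^ (γ - 1) := by
        refine (Mderiv_le hγ0 hγ1 hμ hc0).trans ?_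
        have : c ^ (γ-1) ≤ (t - τ) ^ (γ-1) :=
          Real.rpow_le_rpow_of_nonpos hθ hc.1.le (by linarith)
        nlinarith [this]
      have hrτ : ‖r τ‖ ≤ Cr := hCr τ ⟨hτ.1.le, by linarith⟩
      calc ‖(Mfun γ μ (s - τ) - Mfun γ μ (t - τ)) * r τ / (s - t)‖
          = ‖(Mfun γ μ (s - τ) - Mfun γ μ (t - τ)) / (s - t)‖ * ‖r τ‖ := by
            rw [← norm_mul]; congr 1; ring
        _ ≤ (μ/2 * (t - τ) ^ (γ - 1)) * Cr := by
            apply mul_le_mul _ hrτ (norm_nonneg _)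
            · positivity
            · rw [heq2, Real.norm_eq_abs,
                abs_of_nonneg (Mderiv_nonneg hγ0 hγ1 hμ hc0)]
              exact hbc
        _ = μ/2 * (t - τ) ^ (γ - 1) * Cr := by ring
    · -- bound integrable
      have h0 := (intervalIntegrable_rpow' (a := 0) (b := t)
        (r := γ - 1) (by linarith)).comp_sub_left t
      simp only [sub_zero, sub_self] at h0
      exact ((h0.symm).const_mul (μ/2)).mul_const Cr
    · -- pointwise limit
      filter_upwards [h_ne] with τ hτt hτ
      rw [uIoc_of_le ht0.le] at hτ
      have hτt' : τ < t := lt_of_le_of_ne hτ.2 hτt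
      have hθ : 0 < t - τ := by linarith
      have hd := Mfun_hasDeriv hγ0 hγ1 hμ hθ
      rw [hd.deriv]
      have hslope := hasDerivAt_iff_tendsto_slope.mp hd
      have hmap : Filter.Tendsto (fun s => s - τ) (𝓝[>] t) (𝓝[≠] (t - τ)) := by
        apply Filter.Tendsto.mono_right _
          (nhdsWithin_mono _ (fun x hx => (ne_of_gt (mem_Ioi.mp hx) : x ≠ t - τ)))
        refine tendsto_nhdsWithin_of_tendsto_nhds_of_eventually_within _ ?_ ?_
        · exact ((continuous_id.sub continuous_const).tendsto t).mono_left nhdsWithin_le_nhds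
        · filter_upwards [self_mem_nhdsWithin] with s hs
          exact mem_Ioi.mpr (by simp at hs ⊢; linarith)
      have hcomp := (hslope.comp hmap).mul_const (r τ)
      refine hcomp.congr' ?_
      filter_upwards [hs_ev] with s hs
      show slope (Mfun γ μ) (t - τ) (s - τ) * r τ = _
      rw [slope_def_field]
      rw [show s - τ - (t - τ) = s - t by ring]
      ring
  -- B: boundary term tends to 0
  have hB : Filter.Tendsto
      (fun s => (∫ τ in t..s, Mfun γ μ (s - τ) * r τ) / (s - t)) (𝓝[>] t) (𝓝 0) := by
    have htend : Filter.Tendsto (fun s : ℝ => μ/(2*γ) * Cr * (s - t) ^ γ) (𝓝[>] t) (𝓝 0) := by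
      have h1 : Filter.Tendsto (fun s : ℝ => s - t) (𝓝[>] t) (𝓝 0) := by
        have h0 : Filter.Tendsto (fun s : ℝ => s - t) (𝓝 t) (𝓝 (t - t)) :=
          (continuous_id.sub continuous_const).tendsto t
        rw [sub_self] at h0
        exact h0.mono_left nhdsWithin_le_nhds
      have h2 : Filter.Tendsto (fun s : ℝ => (s - t) ^ γ) (𝓝[>] t) (𝓝 0) := by
        have hc : ContinuousAt (fun x : ℝ => x ^ γ) 0 :=
          Real.continuousAt_rpow_const 0 γ (Or.inr hγ0.le)
        have := hc.tendsto.comp h1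
        rwa [Real.zero_rpow hγ0.ne'] at this
      have := h2.const_mul (μ/(2*γ) * Cr)
      simpa using this
    refine squeeze_zero_norm' ?_ htend
    · filter_upwards [hs_ev] with s hs
      have hst : 0 < s - t := by linarith [hs.1]
      have hnorm : ‖∫ τ in t..s, Mfun γ μ (s - τ) * r τ‖ ≤
          (μ/(2*γ) * (s - t) ^ γ * Cr) * |s - t| := by
        apply intervalIntegral.norm_integral_le_of_norm_le_const
        intro τ hτ
        rw [uIoc_of_le (by linarith [hs.1] : t ≤ s)] at hτ
        have h1 : 0 ≤ s - τ := by linarith [hτ.2]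
        have h2 : Mfun γ μ (s - τ) ≤ μ/(2*γ) * (s - τ) ^ γ := M_le hγ0 hγ1 hμ h1
        have h3 : (s - τ) ^ γ ≤ (s - t) ^ γ :=
          Real.rpow_le_rpow h1 (by linarith [hτ.1]) hγ0.le
        have h4 : ‖r τ‖ ≤ Cr := hCr τ ⟨by linarith [hτ.1], by linarith [hτ.2, hs.2]⟩
        rw [norm_mul, Real.norm_eq_abs (Mfun _ _ _),
          abs_of_nonneg (M_nonneg hγ0 hγ1 hμ h1)]
        apply mul_le_mul _ h4 (norm_nonneg _) (by positivity)
        refine h2.trans ?_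
        exact mul_le_mul_of_nonneg_left h3 (by positivity)
      rw [norm_div, Real.norm_eq_abs (s - t)]
      rw [div_le_iff₀ (by rwa [abs_of_pos hst])]
      calc ‖∫ τ in t..s, Mfun γ μ (s - τ) * r τ‖
          ≤ (μ/(2*γ) * (s - t) ^ γ * Cr) * |s - t| := hnorm
        _ = μ/(2*γ) * Cr * (s - t) ^ γ * |s - t| := by ring
  -- combine
  have hslope_eq : ∀ᶠ s in 𝓝[>] t, slope v₃ t s =
      (∫ τ in (0:ℝ)..t, (Mfun γ μ (s - τ) - Mfun γ μ (t - τ)) * r τ / (s - t)) +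
      (∫ τ in t..s, Mfun γ μ (s - τ) * r τ) / (s - t) := by
    filter_upwards [hs_ev] with s hs
    have hst : 0 < s - t := by linarith [hs.1]
    have ha : IntervalIntegrable (fun τ => Mfun γ μ (s - τ) * r τ) volume 0 t :=
      Mr_int hγ0 hγ1 hμ hr hCr (by linarith [hs.1]) hs.2.le
        ⟨le_refl 0, by linarith [hs.1]⟩ ⟨ht0.le, hs.1.le⟩
    have hb : IntervalIntegrable (fun τ => Mfun γ μ (s - τ) * r τ) volume t s :=
      Mr_int hγ0 hγ1 hμ hr hCr (by linarith [hs.1]) hs.2.le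
        ⟨ht0.le, hs.1.le⟩ ⟨by linarith [hs.1], le_refl s⟩
    have hc : IntervalIntegrable (fun τ => Mfun γ μ (t - τ) * r τ) volume 0 t :=
      Mr_int hγ0 hγ1 hμ hr hCr ht0 htT.le ⟨le_refl 0, ht0.le⟩ ⟨ht0.le, le_refl t⟩
    rw [slope_def_field, hv₃ s, hv₃ t]
    rw [← intervalIntegral.integral_add_adjacent_intervals ha hb]
    have hsub : (∫ τ in (0:ℝ)..t, Mfun γ μ (s - τ) * r τ) -
        (∫ τ in (0:ℝ)..t, Mfun γ μ (t - τ) * r τ) =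
        ∫ τ in (0:ℝ)..t, (Mfun γ μ (s - τ) - Mfun γ μ (t - τ)) * r τ := by
      rw [← intervalIntegral.integral_sub ha hc]
      congr 1
      funext τ
      ring
    rw [intervalIntegral.integral_div]
    rw [show (∫ τ in (0:ℝ)..t, Mfun γ μ (s - τ) * r τ) +
        (∫ τ in t..s, Mfun γ μ (s - τ) * r τ) - (∫ τ in (0:ℝ)..t, Mfun γ μ (t - τ) * r τ) =
        ((∫ τ in (0:ℝ)..t, Mfun γ μ (s - τ) * r τ) -
          (∫ τ in (0:ℝ)..t, Mfun γ μ (t - τ) * r τ)) +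
        (∫ τ in t..s, Mfun γ μ (s - τ) * r τ) by ring]
    rw [hsub, add_div]
  have := (hA.add hB).congr' (Filter.EventuallyEq.symm hslope_eq)
  rwa [add_zero] at this
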